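/- arXiv:1902.09942 — 4 statements merged into one kernel-verified Lean document; each statement's English description precedes it below -/
import Mathlib

section
/- There is exactly one polynomial R in two variables with rational coefficients of total degree at most 3 satisfying all of the following: (i) R(a,b) = −R(1−a,−b) for all rational a, b; (ii) R(2x, 2x+y) − R(2x−1, 2x+y−2) = −4x² + 12xy − 9y² + 4x − 6y − 1 for all rational x, y; (iii) R(0,0) = −1; (iv) R(0,1) = −19. This polynomial is R(x,y) = (28/3)x³ − 22x²y + 17xy² − (13/3)y³ − 14x² + 22xy − (17/2)y² + (20/3)x − (31/6)y − 1. -/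
set_option maxHeartbeats 1000000


open MvPolynomial

/-- The polynomial `R_(X,L)` of the 4-dimensional scroll. -/
noncomputable def Rspec : MvPolynomial (Fin 2) ℚ :=
  C (28/3) * X 0 ^ 3 - C 22 * X 0 ^ 2 * X 1 + C 17 * X 0 * X 1 ^ 2 - C (13/3) * X 1 ^ 3
    - C 14 * X 0 ^ 2 + C 22 * X 0 * X 1 - C (17/2) * X 1 ^ 2
    + C (20/3) * X 0 - C (31/6) * X 1 - 1

/-- The exponent finsupp for the monomial `x^i y^j`. -/
noncomputable def m2 (i j : ℕ) : Fin 2 →₀ ℕ := Finsupp.single 0 i + Finsupp.single 1 j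

lemma m2_apply0 (i j : ℕ) : m2 i j 0 = i := by
  simp [m2, Finsupp.single_apply]

lemma m2_apply1 (i j : ℕ) : m2 i j 1 = j := by
  simp [m2, Finsupp.single_apply]

lemma fin2_finsupp_eq (d : Fin 2 →₀ ℕ) : d = m2 (d 0) (d 1) := by
  ext i
  fin_cases i
  · simp [m2, Finsupp.single_apply]
  · simp [m2, Finsupp.single_apply]

lemma m2_eq_iff (i j i' j' : ℕ) : m2 i j = m2 i' j' ↔ i = i' ∧ j = j' := by
  constructor
  · intro h
    have h0 := congrArg (fun f => f 0) h
    have h1 := congrArg (fun f => f 1) h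
    simp only [m2_apply0, m2_apply1] at h0 h1
    exact ⟨h0, h1⟩
  · rintro ⟨rfl, rfl⟩; rfl

lemma m2_monomial (c : ℚ) (i j : ℕ) :
    (monomial (m2 i j) c : MvPolynomial (Fin 2) ℚ) = C c * X 0 ^ i * X 1 ^ j := by
  rw [X_pow_eq_monomial, X_pow_eq_monomial, C_apply, monomial_mul, monomial_mul,
    mul_one, mul_one, m2, zero_add]

lemma eval_m2 (a b c : ℚ) (i j : ℕ) :
    eval ![a, b] (monomial (m2 i j) c) = c * a ^ i * b ^ j := by
  rw [m2_monomial]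
  simp

lemma m2_sum (i j : ℕ) : ((m2 i j).sum fun _ e => e) = i + j := by
  rw [Finsupp.sum_fintype _ _ fun _ => rfl, Fin.sum_univ_two, m2_apply0, m2_apply1]

lemma m2_sum' (i j : ℕ) : ((m2 i j).sum fun _ => id) = i + j := m2_sum i j

lemma decomp (R : MvPolynomial (Fin 2) ℚ) (hdeg : R.totalDegree ≤ 3) :
    R = monomial (m2 0 0) (R.coeff (m2 0 0)) + monomial (m2 1 0) (R.coeff (m2 1 0))
      + monomial (m2 0 1) (R.coeff (m2 0 1)) + monomial (m2 2 0) (R.coeff (m2 2 0))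
      + monomial (m2 1 1) (R.coeff (m2 1 1)) + monomial (m2 0 2) (R.coeff (m2 0 2))
      + monomial (m2 3 0) (R.coeff (m2 3 0)) + monomial (m2 2 1) (R.coeff (m2 2 1))
      + monomial (m2 1 2) (R.coeff (m2 1 2)) + monomial (m2 0 3) (R.coeff (m2 0 3)) := by
  ext d
  simp only [coeff_add, coeff_monomial]
  by_cases h3 : d 0 + d 1 ≤ 3
  · obtain ⟨i, j, hij, rfl⟩ : ∃ i j, i + j ≤ 3 ∧ d = m2 i j :=
      ⟨d 0, d 1, h3, fin2_finsupp_eq d⟩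
    have hi : i ≤ 3 := by omega
    have hj : j ≤ 3 := by omega
    interval_cases i <;> interval_cases j <;>
      first
        | omega
        | simp [m2_eq_iff]
  · have hd : R.coeff d = 0 := by
      apply coeff_eq_zero_of_totalDegree_lt
      have hds := m2_sum (d 0) (d 1)
      rw [← fin2_finsupp_eq d] at hds
      have he : (∑ i ∈ d.support, d i) = d.sum fun _ e => e := rfl
      omega
    have hne : ∀ i j : ℕ, i + j ≤ 3 → ¬(m2 i j = d) := by
      intro i j hij h
      have h0 := congrArg (fun f => f 0) h
      have h1 := congrArg (fun f => f 1) h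
      simp only [m2_apply0, m2_apply1] at h0 h1
      omega
    rw [hd, if_neg (hne 0 0 (by norm_num)), if_neg (hne 1 0 (by norm_num)),
      if_neg (hne 0 1 (by norm_num)), if_neg (hne 2 0 (by norm_num)),
      if_neg (hne 1 1 (by norm_num)), if_neg (hne 0 2 (by norm_num)),
      if_neg (hne 3 0 (by norm_num)), if_neg (hne 2 1 (by norm_num)),
      if_neg (hne 1 2 (by norm_num)), if_neg (hne 0 3 (by norm_num))]
    norm_num

lemma evalForm (R : MvPolynomial (Fin 2) ℚ) (hdeg : R.totalDegree ≤ 3) (a b : ℚ) :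
    eval ![a, b] R = R.coeff (m2 0 0) + R.coeff (m2 1 0) * a + R.coeff (m2 0 1) * b
      + R.coeff (m2 2 0) * a ^ 2 + R.coeff (m2 1 1) * (a * b) + R.coeff (m2 0 2) * b ^ 2
      + R.coeff (m2 3 0) * a ^ 3 + R.coeff (m2 2 1) * (a ^ 2 * b)
      + R.coeff (m2 1 2) * (a * b ^ 2) + R.coeff (m2 0 3) * b ^ 3 := by
  conv_lhs => rw [decomp R hdeg]
  simp only [map_add, eval_m2]
  ring

lemma evalRspec (a b : ℚ) :
    eval ![a, b] Rspec = 28/3 * a ^ 3 - 22 * (a ^ 2 * b) + 17 * (a * b ^ 2) - 13/3 * b ^ 3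
      - 14 * a ^ 2 + 22 * (a * b) - 17/2 * b ^ 2 + 20/3 * a - 31/6 * b - 1 := by
  simp [Rspec]
  ring

theorem unique_R_polynomial (R : MvPolynomial (Fin 2) ℚ) :
    (R.totalDegree ≤ 3 ∧
      (∀ a b : ℚ, eval ![a, b] R = -eval ![1 - a, -b] R) ∧
      (∀ x y : ℚ, eval ![2*x, 2*x + y] R - eval ![2*x - 1, 2*x + y - 2] R
        = -4*x^2 + 12*x*y - 9*y^2 + 4*x - 6*y - 1) ∧
      eval ![0, 0] R = -1 ∧
      eval ![0, 1] R = -19) ↔ R = Rspec := by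
  constructor
  · rintro ⟨hdeg, hsym, hrec, h00, h01⟩
    have hev := evalForm R hdeg
    rw [hev] at h00 h01
    norm_num at h00 h01
    have s1 := hsym 0 0
    have s2 := hsym 0 1
    have s3 := hsym 0 2
    have s4 := hsym 2 0
    have s5 := hsym 2 1
    have s6 := hsym 2 2
    have s7 := hsym 3 0
    have s8 := hsym 3 1
    have s9 := hsym 0 3
    have s10 := hsym 2 3
    have s11 := hsym 3 2
    have s12 := hsym 3 3
    rw [hev, hev] at s1 s2 s3 s4 s5 s6 s7 s8 s9 s10 s11 s12
    norm_num at s1 s2 s3 s4 s5 s6 s7 s8 s9 s10 s11 s12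
    have r1 := hrec 0 0
    have r2 := hrec 0 1
    have r3 := hrec 1 0
    have r4 := hrec 1 1
    have r5 := hrec 0 2
    have r6 := hrec 2 0
    have r7 := hrec 2 1
    have r8 := hrec 1 2
    have r9 := hrec 2 2
    have r10 := hrec 3 0
    rw [hev, hev] at r1 r2 r3 r4 r5 r6 r7 r8 r9 r10
    norm_num at r1 r2 r3 r4 r5 r6 r7 r8 r9 r10
    apply MvPolynomial.funext
    intro x
    have hx : x = ![x 0, x 1] := by
      funext i; fin_cases i <;> rfl
    rw [hx, hev, evalRspec]
    have hc00 : R.coeff (m2 0 0) = -1 := by linarith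
    have hc10 : R.coeff (m2 1 0) = 20/3 := by linarith
    have hc01 : R.coeff (m2 0 1) = -31/6 := by linarith
    have hc20 : R.coeff (m2 2 0) = -14 := by linarith
    have hc11 : R.coeff (m2 1 1) = 22 := by linarith
    have hc02 : R.coeff (m2 0 2) = -17/2 := by linarith
    have hc30 : R.coeff (m2 3 0) = 28/3 := by linarith
    have hc21 : R.coeff (m2 2 1) = -22 := by linarith
    have hc12 : R.coeff (m2 1 2) = 17 := by linarith
    have hc03 : R.coeff (m2 0 3) = -13/3 := by linarith
    rw [hc00, hc10, hc01, hc20, hc11, hc02, hc30, hc21, hc12, hc03]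
    ring
  · rintro rfl
    have hdeg : Rspec.totalDegree ≤ 3 := by
      have hR : Rspec = (monomial (m2 3 0) (28/3 : ℚ) + monomial (m2 2 1) (-22 : ℚ)
          + monomial (m2 1 2) (17 : ℚ) + monomial (m2 0 3) (-(13/3) : ℚ)
          + monomial (m2 2 0) (-14 : ℚ) + monomial (m2 1 1) (22 : ℚ)
          + monomial (m2 0 2) (-(17/2) : ℚ) + monomial (m2 1 0) (20/3 : ℚ)
          + monomial (m2 0 1) (-(31/6) : ℚ) + monomial (m2 0 0) (-1 : ℚ)) := by
        rw [Rspec, m2_monomial, m2_monomial, m2_monomial, m2_monomial, m2_monomial,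
          m2_monomial, m2_monomial, m2_monomial, m2_monomial, m2_monomial]
        simp only [map_neg, C_1]
        ring
      rw [hR]
      have key : ∀ (i j : ℕ) (c : ℚ), i + j ≤ 3 →
          (monomial (m2 i j) c : MvPolynomial (Fin 2) ℚ).totalDegree ≤ 3 := by
        intro i j c hij
        refine (totalDegree_monomial_le _ _).trans ?_
        rw [m2_sum']
        exact hij
      refine (totalDegree_add _ _).trans (max_le ?_ (key _ _ _ (by norm_num)))
      refine (totalDegree_add _ _).trans (max_le ?_ (key _ _ _ (by norm_num)))
      refine (totalDegree_add _ _).trans (max_le ?_ (key _ _ _ (by norm_num)))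
      refine (totalDegree_add _ _).trans (max_le ?_ (key _ _ _ (by norm_num)))
      refine (totalDegree_add _ _).trans (max_le ?_ (key _ _ _ (by norm_num)))
      refine (totalDegree_add _ _).trans (max_le ?_ (key _ _ _ (by norm_num)))
      refine (totalDegree_add _ _).trans (max_le ?_ (key _ _ _ (by norm_num)))
      refine (totalDegree_add _ _).trans (max_le ?_ (key _ _ _ (by norm_num)))
      refine (totalDegree_add _ _).trans (max_le ?_ (key _ _ _ (by norm_num)))
      exact key _ _ _ (by norm_num)
    refine ⟨hdeg, ?_, ?_, ?_, ?_⟩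
    · intro a b
      rw [evalRspec, evalRspec]
      ring
    · intro x y
      rw [evalRspec, evalRspec]
      ring
    · rw [evalRspec]; norm_num
    · rw [evalRspec]; norm_num
end

section
/- For integers a and r, the 2×6 matrix over the rationals with first row (−56, 12(4a − r), −6(2a² − r²), a³ − r³, 2, r − a) and second row (28, −66, 51, −13, −1, 1) has rank 1 if and only if a = 3 and r = 1. -/
theorem coefficient_matrix_rank (a r : ℤ) :
    (!![(-56 : ℚ), 12*(4*(a:ℚ) - (r:ℚ)), -6*(2*(a:ℚ)^2 - (r:ℚ)^2), (a:ℚ)^3 - (r:ℚ)^3, 2, (r:ℚ) - (a:ℚ);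
        28, -66, 51, -13, -1, 1]).rank = 1 ↔ a = 3 ∧ r = 1 := by
  set M : Matrix (Fin 2) (Fin 6) ℚ :=
    !![(-56 : ℚ), 12*(4*(a:ℚ) - (r:ℚ)), -6*(2*(a:ℚ)^2 - (r:ℚ)^2), (a:ℚ)^3 - (r:ℚ)^3, 2, (r:ℚ) - (a:ℚ);
        28, -66, 51, -13, -1, 1] with hM
  constructor
  · intro h
    rw [Matrix.rank_eq_finrank_span_cols] at h
    obtain ⟨v, hv0, hv⟩ := finrank_eq_one_iff'.mp h
    -- columns as elements of the span
    have hcol : ∀ j : Fin 6, ∃ t : ℚ, t • (v : Fin 2 → ℚ) = M.transpose j := by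
      intro j
      obtain ⟨t, ht⟩ := hv ⟨M.transpose j, Submodule.subset_span ⟨j, rfl⟩⟩
      exact ⟨t, congrArg Subtype.val ht⟩
    obtain ⟨t0, ht0⟩ := hcol 0
    obtain ⟨t1, ht1⟩ := hcol 1
    obtain ⟨t5, ht5⟩ := hcol 5
    have e00 : t0 * (v : Fin 2 → ℚ) 0 = -56 := by
      have := congrFun ht0 0; simpa [hM] using this
    have e01 : t0 * (v : Fin 2 → ℚ) 1 = 28 := by
      have := congrFun ht0 1; simpa [hM] using this
    have e10 : t1 * (v : Fin 2 → ℚ) 0 = 12*(4*(a:ℚ) - (r:ℚ)) := by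
      have := congrFun ht1 0; simpa [hM] using this
    have e11 : t1 * (v : Fin 2 → ℚ) 1 = -66 := by
      have := congrFun ht1 1; simpa [hM] using this
    have e50 : t5 * (v : Fin 2 → ℚ) 0 = (r:ℚ) - (a:ℚ) := by
      have := congrFun ht5 0; simpa [hM] using this
    have e51 : t5 * (v : Fin 2 → ℚ) 1 = 1 := by
      have := congrFun ht5 1; simpa [hM] using this
    -- cross relations
    have key1 : (12*(4*(a:ℚ) - (r:ℚ))) * 28 = (-56) * (-66) := by
      calc (12*(4*(a:ℚ) - (r:ℚ))) * 28 = (t1 * (v : Fin 2 → ℚ) 0) * (t0 * (v : Fin 2 → ℚ) 1) := by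
            rw [e10, e01]
        _ = (t0 * (v : Fin 2 → ℚ) 0) * (t1 * (v : Fin 2 → ℚ) 1) := by ring
        _ = (-56) * (-66) := by rw [e00, e11]
    have key5 : ((r:ℚ) - (a:ℚ)) * 28 = (-56) * 1 := by
      calc ((r:ℚ) - (a:ℚ)) * 28 = (t5 * (v : Fin 2 → ℚ) 0) * (t0 * (v : Fin 2 → ℚ) 1) := by
            rw [e50, e01]
        _ = (t0 * (v : Fin 2 → ℚ) 0) * (t5 * (v : Fin 2 → ℚ) 1) := by ring
        _ = (-56) * 1 := by rw [e00, e51]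
    have ha : (a : ℚ) = 3 := by linarith
    have hr : (r : ℚ) = 1 := by linarith
    exact ⟨by exact_mod_cast ha, by exact_mod_cast hr⟩
  · rintro ⟨ha, hr⟩
    subst ha hr
    have hM' : M = !![(-56 : ℚ), 132, -102, 26, 2, -2; 28, -66, 51, -13, -1, 1] := by
      rw [hM]; norm_num
    rw [Matrix.rank_eq_finrank_span_cols, hM']
    have hsp : Submodule.span ℚ (Set.range (!![(-56 : ℚ), 132, -102, 26, 2, -2; 28, -66, 51, -13, -1, 1]).transpose)
        = Submodule.span ℚ {![(-2 : ℚ), 1]} := by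
      apply le_antisymm
      · rw [Submodule.span_le]
        rintro _ ⟨j, rfl⟩
        fin_cases j
        · exact Submodule.mem_span_singleton.mpr ⟨28, by ext i; fin_cases i <;> norm_num⟩
        · exact Submodule.mem_span_singleton.mpr ⟨-66, by ext i; fin_cases i <;> norm_num⟩
        · exact Submodule.mem_span_singleton.mpr ⟨51, by ext i; fin_cases i <;> norm_num⟩
        · exact Submodule.mem_span_singleton.mpr ⟨-13, by ext i; fin_cases i <;> norm_num⟩
        · exact Submodule.mem_span_singleton.mpr ⟨-1, by ext i; fin_cases i <;> norm_num⟩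
        · exact Submodule.mem_span_singleton.mpr ⟨1, by ext i; fin_cases i <;> norm_num⟩
      · rw [Submodule.span_le, Set.singleton_subset_iff]
        apply Submodule.subset_span
        exact ⟨5, by ext i; fin_cases i <;> rfl⟩
    erw [hsp]
    exact finrank_span_singleton (by
      intro hc
      have := congrFun hc 1
      norm_num at this)
end

section
/- Let a and r be rational numbers. There exists a nonzero rational number c such that (1/6)(−56u³ + 12(4a − r)u²v − 6(2a² − r²)uv² + (a³ − r³)v³ + 2u − (a − r)v) = c·(1/3)(28u³ − 66u²v + 51uv² − 13v³ − u + v) for all rational u and v if and only if a = 3 and r = 1; in that case c = −1. -/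
theorem proportional_iff (a r : ℚ) :
    ((∃ c : ℚ, c ≠ 0 ∧ ∀ u v : ℚ,
        (1/6) * (-56*u^3 + 12*(4*a - r)*u^2*v - 6*(2*a^2 - r^2)*u*v^2 + (a^3 - r^3)*v^3
          + 2*u - (a - r)*v)
        = c * ((1/3) * (28*u^3 - 66*u^2*v + 51*u*v^2 - 13*v^3 - u + v)))
      ↔ (a = 3 ∧ r = 1)) ∧
    (∀ c : ℚ, a = 3 → r = 1 →
      (∀ u v : ℚ,
        (1/6) * (-56*u^3 + 12*(4*a - r)*u^2*v - 6*(2*a^2 - r^2)*u*v^2 + (a^3 - r^3)*v^3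
          + 2*u - (a - r)*v)
        = c * ((1/3) * (28*u^3 - 66*u^2*v + 51*u*v^2 - 13*v^3 - u + v))) → c = -1) := by
  constructor
  · constructor
    · rintro ⟨c, hc0, h⟩
      have h10 := h 1 0
      have hc : c = -1 := by norm_num at h10; linarith
      subst hc
      have h01 := h 0 1
      have h11 := h 1 1
      have h1m := h 1 (-1)
      have h12 := h 1 2
      have h21 := h 2 1
      norm_num at h01 h11 h1m h12 h21
      constructor <;> nlinarith [h01, h11, h1m, h12, h21, sq_nonneg a, sq_nonneg r]
    · rintro ⟨ha, hr⟩
      subst ha; subst hr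
      exact ⟨-1, by norm_num, fun u v => by ring⟩
  · intro c ha hr h
    subst ha; subst hr
    have h10 := h 1 0
    norm_num at h10
    linarith
end

section
/- For every positive rational number a there is no nonzero rational number c such that (1/6)(av − 4u − 1)(av − 4u)(av − 4u + 1) = c·(1/3)(28u³ − 66u²v + 51uv² − 13v³ − u + v) for all rational u and v. -/
theorem not_hilbert_curve_of_P3 (a : ℚ) (ha : 0 < a) :
    ¬ ∃ c : ℚ, c ≠ 0 ∧ ∀ u v : ℚ,
      (1/6) * (a*v - 4*u - 1) * (a*v - 4*u) * (a*v - 4*u + 1)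
        = c * ((1/3) * (28*u^3 - 66*u^2*v + 51*u*v^2 - 13*v^3 - u + v)) := by
  rintro ⟨c, hc, h⟩
  have h10 := h 1 0
  have h11 := h 1 1
  have h01 := h 0 1
  have hcval : c = -10/9 := by linarith [h10]
  subst hcval
  -- h11 gives (a-5)(a-4)(a-3) = 0
  have h2 : (a - 5) * (a - 4) * (a - 3) = 0 := by nlinarith [h11]
  have h3 : (a - 1) * a * (a + 1) = 80/3 := by nlinarith [h01]
  rcases mul_eq_zero.mp h2 with h' | h'
  · rcases mul_eq_zero.mp h' with h'' | h''
    · have : a = 5 := by linarith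
      rw [this] at h3; norm_num at h3
    · have : a = 4 := by linarith
      rw [this] at h3; norm_num at h3
  · have : a = 3 := by linarith
    rw [this] at h3; norm_num at h3
end
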